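/- Let N ≥ 1, let Ω ⊆ ℝ^N be a bounded open set whose topological boundary ∂Ω satisfies 𝓗^{N−1}(∂Ω) < ∞, let g : ℝ^N → ℝ be continuous and nonnegative on ∂Ω with 0 < ∫_{∂Ω} g d𝓗^{N−1} < ∞, and let α satisfy 0 < α < 𝓛^N(Ω). Then the supremum sup{ ∫_{∂Ω} g v d𝓗^{N−1} : v : closure(Ω) → ℝ is Lipschitz with constant 1 and 𝓛^N({x ∈ Ω : v(x) > 0}) ≤ α } is finite and attained: there exists a function u_∞, Lipschitz with constant 1 on closure(Ω), with 𝓛^N({x ∈ Ω : u_∞(x) > 0}) ≤ α, such that ∫_{∂Ω} g u_∞ d𝓗^{N−1} equals this supremum. -/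

import Mathlib

set_option maxHeartbeats 1000000


open MeasureTheory Metric Set
open scoped ENNReal NNReal

/-- The limiting volume-constrained maximization problem `𝔓_∞[α]` admits a maximizer:
there is a `1`-Lipschitz function `u` on `closure Ω` whose positivity set in `Ω` has
Lebesgue measure at most `α`, maximizing the boundary functional
`v ↦ ∫_{∂Ω} g v dℋ^{N-1}` among all such admissible functions. -/
theorem limit_problem_sup_attained (N : ℕ) (hN : 1 ≤ N)
    (Ω : Set (EuclideanSpace ℝ (Fin N))) (hΩo : IsOpen Ω)
    (hΩb : Bornology.IsBounded Ω)
    (hH : μH[(N : ℝ) - 1] (frontier Ω) < ⊤)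
    (g : EuclideanSpace ℝ (Fin N) → ℝ) (hgc : Continuous g)
    (hg0 : ∀ x ∈ frontier Ω, 0 ≤ g x)
    (hgint : IntegrableOn g (frontier Ω) μH[(N : ℝ) - 1])
    (hgpos : 0 < ∫ x in frontier Ω, g x ∂μH[(N : ℝ) - 1])
    (α : ℝ) (hα0 : 0 < α) (hα : ENNReal.ofReal α < volume Ω) :
    ∃ u : EuclideanSpace ℝ (Fin N) → ℝ,
      LipschitzOnWith 1 u (closure Ω) ∧
      volume {x ∈ Ω | 0 < u x} ≤ ENNReal.ofReal α ∧
      ∀ v : EuclideanSpace ℝ (Fin N) → ℝ,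
        LipschitzOnWith 1 v (closure Ω) →
        volume {x ∈ Ω | 0 < v x} ≤ ENNReal.ofReal α →
        ∫ x in frontier Ω, g x * v x ∂μH[(N : ℝ) - 1] ≤
          ∫ x in frontier Ω, g x * u x ∂μH[(N : ℝ) - 1] := by
  classical
  set μ : Measure (EuclideanSpace ℝ (Fin N)) := μH[(N : ℝ) - 1] with hμ
  set K : Set (EuclideanSpace ℝ (Fin N)) := closure Ω with hKdef
  -- basic facts
  have hΩne : Ω.Nonempty := by
    rcases Ω.eq_empty_or_nonempty with h | h
    · rw [h] at hα
      simp only [measure_empty] at hα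
      exact absurd hα (by simp)
    · exact h
  have hK : IsCompact K := hΩb.isCompact_closure
  have hKne : K.Nonempty := hΩne.closure
  haveI : CompactSpace K := isCompact_iff_compactSpace.mp hK
  haveI : Nonempty K := hKne.to_subtype
  have hFsub : frontier Ω ⊆ K := frontier_subset_closure
  have hFclosed : IsClosed (frontier Ω) := isClosed_frontier
  have hFm : MeasurableSet (frontier Ω) := hFclosed.measurableSet
  have hFcpt : IsCompact (frontier Ω) := hK.of_isClosed_subset hFclosed hFsub
  haveI : IsFiniteMeasure (μ.restrict (frontier Ω)) :=
    ⟨by rwa [Measure.restrict_apply_univ]⟩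
  set D : ℝ := diam K with hD
  have hD0 : 0 ≤ D := diam_nonneg
  -- infDist to any nonempty subset of K is bounded by D on K
  have hdistK : ∀ (s : Set (EuclideanSpace ℝ (Fin N))), s ⊆ K → s.Nonempty → ∀ x ∈ K, infDist x s ≤ D := by
    intro s hsK ⟨y, hy⟩ x hx
    exact (infDist_le_dist_of_mem hy).trans (dist_le_diam_of_mem hK.isBounded hx (hsK hy))
  -- integrability helper
  have hInt : ∀ (w : EuclideanSpace ℝ (Fin N) → ℝ), ContinuousOn w (frontier Ω) →
      (∃ c : ℝ, ∀ x ∈ frontier Ω, |w x| ≤ c) →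
      IntegrableOn (fun x => g x * w x) (frontier Ω) μ := by
    rintro w hw ⟨c, hc⟩
    have h1 : IntegrableOn (fun x => w x * g x) (frontier Ω) μ := by
      refine hgint.bdd_mul (c := c) (hw.aestronglyMeasurable hFm) ?_
      refine (ae_restrict_iff' hFm).2 (ae_of_all _ ?_)
      intro x hx; simpa [Real.norm_eq_abs] using hc x hx
    exact h1.congr (ae_of_all _ fun x => mul_comm _ _)
  -- the functional
  set F : Set (EuclideanSpace ℝ (Fin N)) → ℝ := fun s => ∫ x in frontier Ω, g x * infDist x s ∂μ with hFdef
  have hIntF : ∀ (s : Set (EuclideanSpace ℝ (Fin N))), IntegrableOn (fun x => g x * infDist x s) (frontier Ω) μ := by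
    intro s
    refine hInt _ (continuous_infDist_pt s).continuousOn ?_
    obtain ⟨c, hc⟩ := hFcpt.exists_bound_of_continuousOn (continuous_infDist_pt s).continuousOn
    exact ⟨c, fun x hx => by simpa [Real.norm_eq_abs] using hc x hx⟩
  -- the image map from nonempty compacts of K
  set ι : TopologicalSpace.NonemptyCompacts K → Set (EuclideanSpace ℝ (Fin N)) :=
    fun C => Subtype.val '' (C : Set K) with hιdef
  have hιK : ∀ C, ι C ⊆ K := by
    rintro C x ⟨y, _, rfl⟩; exact y.2
  have hιne : ∀ C, (ι C).Nonempty := fun C => C.nonempty.image _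
  have hιcpt : ∀ C, IsCompact (ι C) := fun C => C.isCompact.image continuous_subtype_val
  -- Lipschitz estimate for infDist w.r.t. the Hausdorff metric on NonemptyCompacts K
  have hlip : ∀ (x : EuclideanSpace ℝ (Fin N)) (C₁ C₂ : TopologicalSpace.NonemptyCompacts K),
      |infDist x (ι C₁) - infDist x (ι C₂)| ≤ dist C₁ C₂ := by
    intro x C₁ C₂
    set j : TopologicalSpace.NonemptyCompacts K → TopologicalSpace.NonemptyCompacts (EuclideanSpace ℝ (Fin N)) :=
      fun C => ⟨⟨ι C, hιcpt C⟩, hιne C⟩ with hj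
    have h1 : dist (j C₁) (j C₂) = dist C₁ C₂ := by
      rw [Metric.NonemptyCompacts.dist_eq, Metric.NonemptyCompacts.dist_eq]
      exact hausdorffDist_image isometry_subtype_coe
    have h2 := (lipschitz_infDist_set x).dist_le_mul (j C₁) (j C₂)
    rw [h1, NNReal.coe_one, one_mul] at h2
    rw [Real.dist_eq] at h2
    exact h2
  -- pointwise convergence of infDist along a convergent sequence of compacts
  have hpt : ∀ (c : ℕ → TopologicalSpace.NonemptyCompacts K)
      (C : TopologicalSpace.NonemptyCompacts K),
      Filter.Tendsto c Filter.atTop (nhds C) → ∀ x : EuclideanSpace ℝ (Fin N),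
      Filter.Tendsto (fun n => infDist x (ι (c n))) Filter.atTop (nhds (infDist x (ι C))) := by
    intro c C hc x
    rw [tendsto_iff_dist_tendsto_zero]
    have hd : Filter.Tendsto (fun n => dist (c n) C) Filter.atTop (nhds 0) :=
      tendsto_iff_dist_tendsto_zero.mp hc
    refine squeeze_zero (fun n => dist_nonneg) (fun n => ?_) hd
    simpa [Real.dist_eq] using hlip x (c n) C
  -- the admissible set of values
  set S : Set ℝ := {r | ∃ C : TopologicalSpace.NonemptyCompacts K,
      volume (Ω \ ι C) ≤ ENNReal.ofReal α ∧ F (ι C) = r} with hSdef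
  have hSne : S.Nonempty := by
    refine ⟨F (ι ⊤), ⟨⊤, ?_, rfl⟩⟩
    have : ι ⊤ = K := by
      simp only [hιdef, TopologicalSpace.NonemptyCompacts.coe_top]
      exact Subtype.coe_image_univ K
    rw [this]
    have : Ω \ K = ∅ := diff_eq_empty.2 subset_closure
    simp [this]
  have hSbdd : BddAbove S := by
    refine ⟨∫ x in frontier Ω, g x * D ∂μ, ?_⟩
    rintro r ⟨C, _, rfl⟩
    refine setIntegral_mono_on (hIntF _) (hInt _ continuousOn_const ⟨|D|, fun x _ => le_rfl⟩)
      hFm ?_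
    intro x hx
    exact mul_le_mul_of_nonneg_left (hdistK _ (hιK C) (hιne C) x (hFsub hx)) (hg0 x hx)
  set M : ℝ := sSup S with hM
  -- a maximizing sequence
  have hseq : ∀ n : ℕ, ∃ C : TopologicalSpace.NonemptyCompacts K,
      volume (Ω \ ι C) ≤ ENNReal.ofReal α ∧ M - 1 / (n + 1) < F (ι C) := by
    intro n
    have hlt : M - 1 / (n + 1) < M := by
      have : (0:ℝ) < 1 / (n + 1) := by positivity
      linarith
    obtain ⟨r, ⟨C, hC1, hC2⟩, hr⟩ := exists_lt_of_lt_csSup hSne hlt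
    exact ⟨C, hC1, hC2 ▸ hr⟩
  choose c hvol hFc using hseq
  -- extract a convergent subsequence
  obtain ⟨Clim, -, φ, hφ, hconv⟩ := isCompact_univ.tendsto_subseq (fun n => mem_univ (c n))
  -- the limit constraint
  have hconstraint : volume (Ω \ ι Clim) ≤ ENNReal.ofReal α := by
    set A : ℕ → Set (EuclideanSpace ℝ (Fin N)) := fun n => ⋂ (m) (_ : n ≤ m), (Ω \ ι (c (φ m))) with hA
    have hmono : Monotone A := by
      intro n k hnk x hx
      simp only [hA, mem_iInter] at hx ⊢
      intro m hm; exact hx m (hnk.trans hm)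
    have hsub : Ω \ ι Clim ⊆ ⋃ n, A n := by
      rintro x ⟨hxΩ, hxC⟩
      have hpos : 0 < infDist x (ι Clim) :=
        ((hιcpt Clim).isClosed.notMem_iff_infDist_pos (hιne Clim)).1 hxC
      have hcv := hpt (fun n => c (φ n)) Clim hconv x
      have hev : ∀ᶠ n in Filter.atTop, 0 < infDist x (ι (c (φ n))) :=
        hcv.eventually (eventually_gt_nhds hpos)
      obtain ⟨n, hn⟩ := hev.exists_forall_of_atTop
      refine mem_iUnion.2 ⟨n, ?_⟩
      simp only [hA, mem_iInter]
      intro m hm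
      refine ⟨hxΩ, fun hxm => ?_⟩
      have := hn m hm
      rw [infDist_zero_of_mem hxm] at this
      exact lt_irrefl _ this
    calc volume (Ω \ ι Clim) ≤ volume (⋃ n, A n) := measure_mono hsub
      _ = ⨆ n, volume (A n) := hmono.measure_iUnion
      _ ≤ ENNReal.ofReal α := by
          refine iSup_le fun n => ?_
          refine le_trans (measure_mono ?_) (hvol (φ n))
          exact iInter₂_subset n le_rfl
  -- the limit value
  have hFlim : Filter.Tendsto (fun n => F (ι (c (φ n)))) Filter.atTop (nhds (F (ι Clim))) := by
    refine tendsto_integral_of_dominated_convergence (fun x => ‖g x‖ * D)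
      (fun n => ((hgc.continuousOn.mul (continuous_infDist_pt _).continuousOn).aestronglyMeasurable
        hFm)) (hgint.norm.mul_const D) (fun n => ?_) ?_
    · refine (ae_restrict_iff' hFm).2 (ae_of_all _ fun x hx => ?_)
      rw [norm_mul]
      refine mul_le_mul_of_nonneg_left ?_ (norm_nonneg _)
      rw [Real.norm_eq_abs, abs_of_nonneg infDist_nonneg]
      exact hdistK _ (hιK _) (hιne _) x (hFsub hx)
    · refine ae_of_all _ fun x => ?_
      exact (hpt (fun n => c (φ n)) Clim hconv x).const_mul (g x)
  have hMle : M ≤ F (ι Clim) := by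
    have h1 : Filter.Tendsto (fun n : ℕ => M - 1 / (n + 1)) Filter.atTop (nhds M) := by
      have := tendsto_one_div_add_atTop_nhds_zero_nat (𝕜 := ℝ)
      have := Filter.Tendsto.const_sub M this
      simpa using this
    refine le_of_tendsto_of_tendsto' h1 hFlim fun n => ?_
    have h2 : M - 1 / (φ n + 1) < F (ι (c (φ n))) := hFc (φ n)
    have h3 : (1:ℝ) / (φ n + 1) ≤ 1 / (n + 1) := by
      apply one_div_le_one_div_of_le (by positivity)
      have := hφ.le_apply (x := n)
      push_cast
      exact_mod_cast add_le_add_left (Nat.cast_le.2 this) 1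
    linarith
  -- the maximizer
  refine ⟨fun x => infDist x (ι Clim), (lipschitz_infDist_pt (ι Clim)).lipschitzOnWith, ?_, ?_⟩
  · refine le_trans (measure_mono ?_) hconstraint
    rintro x ⟨hxΩ, hx⟩
    have hx' : 0 < infDist x (ι Clim) := hx
    refine ⟨hxΩ, fun hmem => ?_⟩
    rw [infDist_zero_of_mem hmem] at hx'
    exact lt_irrefl _ hx'
  · intro v hv hvvol
    -- the compact set where v ≤ 0
    set s_v : Set K := {y : K | v y ≤ 0} with hsv
    have hvcont : Continuous fun y : K => v y := by
      have : ContinuousOn v K := hv.continuousOn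
      exact this.restrict
    have hsvclosed : IsClosed s_v := isClosed_Iic.preimage hvcont
    have hsvne : s_v.Nonempty := by
      by_contra h
      rw [not_nonempty_iff_eq_empty] at h
      have hsub : Ω ⊆ {x ∈ Ω | 0 < v x} := by
        intro x hx
        refine ⟨hx, ?_⟩
        by_contra hvx
        push_neg at hvx
        have : (⟨x, subset_closure hx⟩ : K) ∈ s_v := hvx
        rw [h] at this
        exact this
      exact absurd (le_trans (measure_mono hsub) hvvol) (not_le.2 hα)
    set Cv : TopologicalSpace.NonemptyCompacts K :=
      ⟨⟨s_v, hsvclosed.isCompact⟩, hsvne⟩ with hCv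
    have hCvvol : volume (Ω \ ι Cv) ≤ ENNReal.ofReal α := by
      refine le_trans (measure_mono ?_) hvvol
      rintro x ⟨hxΩ, hx⟩
      refine ⟨hxΩ, ?_⟩
      by_contra hvx
      push_neg at hvx
      exact hx ⟨⟨x, subset_closure hxΩ⟩, hvx, rfl⟩
    -- pointwise bound : v ≤ infDist · (ι Cv) on the frontier
    have hptle : ∀ x ∈ frontier Ω, v x ≤ infDist x (ι Cv) := by
      intro x hx
      by_contra h
      push_neg at h
      obtain ⟨y, hy, hdy⟩ := (infDist_lt_iff (hιne Cv)).1 h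
      obtain ⟨y', hy', rfl⟩ := hy
      have hvy : v y' ≤ 0 := hy'
      have hxd : dist (v x) (v y') ≤ 1 * dist x y' :=
        LipschitzOnWith.dist_le_mul hv x (hFsub hx) y' y'.2
      rw [one_mul, Real.dist_eq] at hxd
      have : v x - v y' ≤ dist x y' := (le_abs_self _).trans hxd
      have : v x ≤ dist x y' := by linarith
      exact absurd (this.trans_lt hdy) (lt_irrefl _)
    -- comparison of integrals
    have hvbd : ∃ cb : ℝ, ∀ x ∈ frontier Ω, |v x| ≤ cb := by
      obtain ⟨cb, hcb⟩ := hFcpt.exists_bound_of_continuousOn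
        (hv.continuousOn.mono hFsub)
      exact ⟨cb, fun x hx => by simpa [Real.norm_eq_abs] using hcb x hx⟩
    have h1 : ∫ x in frontier Ω, g x * v x ∂μ ≤ F (ι Cv) := by
      refine setIntegral_mono_on (hInt _ (hv.continuousOn.mono hFsub) hvbd) (hIntF _) hFm ?_
      intro x hx
      exact mul_le_mul_of_nonneg_left (hptle x hx) (hg0 x hx)
    have h2 : F (ι Cv) ≤ M := le_csSup hSbdd ⟨Cv, hCvvol, rfl⟩
    exact h1.trans (h2.trans hMle)
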